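/- Let Γ be a constraint language over a finite domain D with a hard idempotent set function polymorphism f (i.e., f has two disjoint coherent sets C₀, C₁), and let C be a coherent set with C ≠ D and c_t ∈ C. For an extended Horn clause l₁ ∨ ⋯ ∨ l_k (at most one positive existential literal), define the constraint M = m₁ ∨ ⋯ ∨ m_k where: m_i = (y ∉ C₀) if l_i = y universal; m_i = (y ∉ C₁) if l_i = ¬y universal; m_i = (x = c_t) if l_i = x existential; m_i = (x ∉ C) if l_i = ¬x existential. Then the relation defined by M over D is invariant under f: for any assignments a₁,…,a_n each satisfying M, the assignment a(v) = f({a₁(v),…,a_n(v)}) also satisfies M. -/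

import Mathlib

/-- A literal of an extended Horn clause: a variable, whether it occurs
positively, and whether it is universally quantified. -/
structure HornLit (V : Type*) where
  var : V
  pos : Bool
  univ : Bool

/-- Satisfaction of the translated disjunct `m_i` corresponding to a literal,
with respect to coherent sets `C₀`, `C₁`, `C` and the element `c_t`. -/
def LitSat {D V : Type*} (C0 C1 C : Set D) (ct : D)
    (a : V → D) (l : HornLit V) : Prop :=
  match l.univ, l.pos with
  | true,  true  => a l.var ∉ C0      -- positive universal literal y : (y ∉ C₀)
  | true,  false => a l.var ∉ C1      -- negative universal literal ¬y : (y ∉ C₁)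
  | false, true  => a l.var = ct      -- positive existential literal x : (x = c_t)
  | false, false => a l.var ∉ C       -- negative existential literal ¬x : (x ∉ C)

/-- The constraint `M = m₁ ∨ ⋯ ∨ m_k` obtained from the clause `L`. -/
def ClauseSat {D V : Type*} (C0 C1 C : Set D) (ct : D)
    (a : V → D) (L : List (HornLit V)) : Prop :=
  ∃ l ∈ L, LitSat C0 C1 C ct a l

theorem extended_horn_clause_invariant_under_set_function
    (D : Type*) [Fintype D]
    (f : {S : Set D // S.Nonempty} → D)
    -- f is an idempotent set function
    (hidem : ∀ d : D, f ⟨{d}, Set.singleton_nonempty d⟩ = d)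
    (C0 C1 C : Set D)
    -- C₀, C₁ are disjoint coherent sets (f is hard)
    (hC0 : C0.Nonempty ∧ ∀ A : {S : Set D // S.Nonempty}, f A ∈ C0 → A.1 ⊆ C0)
    (hC1 : C1.Nonempty ∧ ∀ A : {S : Set D // S.Nonempty}, f A ∈ C1 → A.1 ⊆ C1)
    (hdisj : Disjoint C0 C1)
    -- C is a coherent set, C ≠ D, with c_t ∈ C
    (hC : C.Nonempty ∧ ∀ A : {S : Set D // S.Nonempty}, f A ∈ C → A.1 ⊆ C)
    (hCne : C ≠ Set.univ)
    (ct : D) (hct : ct ∈ C)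
    (V : Type*) (L : List (HornLit V))
    -- L is an extended Horn clause: at most one positive existential literal
    (hhorn : (L.filter (fun l => l.pos && !l.univ)).length ≤ 1)
    -- a₁, …, a_n are assignments, each satisfying M
    (n : ℕ) (hn : 0 < n) (a : Fin n → V → D)
    (hsat : ∀ i, ClauseSat C0 C1 C ct (a i) L) :
    -- the pointwise f-image assignment also satisfies M
    ClauseSat C0 C1 C ct
      (fun v => f ⟨Set.range (fun i : Fin n => a i v),
        ⟨a ⟨0, hn⟩ v, ⟨0, hn⟩, rfl⟩⟩) L := by
  classical
  by_cases h : ∃ l ∈ L, (l.univ = true ∨ l.pos = false) ∧ ∃ i, LitSat C0 C1 C ct (a i) l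
  · obtain ⟨⟨v, p, u⟩, hlL, hcase, i, hi⟩ := h
    refine ⟨⟨v, p, u⟩, hlL, ?_⟩
    cases u <;> cases p <;> simp only [LitSat] at hi ⊢
    · intro hmem
      exact hi (hC.2 _ hmem ⟨i, rfl⟩)
    · simp at hcase
    · intro hmem
      exact hi (hC1.2 _ hmem ⟨i, rfl⟩)
    · intro hmem
      exact hi (hC0.2 _ hmem ⟨i, rfl⟩)
  · push_neg at h
    have key : ∀ (i : Fin n) (l : HornLit V), l ∈ L → LitSat C0 C1 C ct (a i) l →
        l.pos = true ∧ l.univ = false := by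
      intro i l hlL hi
      by_contra hc
      have : l.univ = true ∨ l.pos = false := by
        rcases Bool.eq_false_or_eq_true l.univ with h1 | h1
        · exact Or.inl h1
        · rcases Bool.eq_false_or_eq_true l.pos with h2 | h2
          · exact absurd ⟨h2, h1⟩ hc
          · exact Or.inr h2
      exact h l hlL this i hi
    have huniq : ∀ l l', l ∈ L.filter (fun l => l.pos && !l.univ) →
        l' ∈ L.filter (fun l => l.pos && !l.univ) → l = l' := by
      intro l l' hl hl'
      set xs := L.filter (fun l => l.pos && !l.univ) with hxs
      match xs, hhorn, hl, hl' with
      | [], _, hl, _ => exact absurd hl List.not_mem_nil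
      | [x], _, hl, hl' =>
        rw [List.mem_singleton] at hl hl'
        rw [hl, hl']
      | x :: y :: t, hh, _, _ => simp at hh
    obtain ⟨l0, hl0L, h0⟩ := hsat ⟨0, hn⟩
    obtain ⟨hp0, hu0⟩ := key _ _ hl0L h0
    obtain ⟨v, p, u⟩ := l0
    simp only at hp0 hu0
    subst hp0; subst hu0
    have hmemf : (⟨v, true, false⟩ : HornLit V) ∈ L.filter (fun l => l.pos && !l.univ) := by
      simp [List.mem_filter, hl0L]
    have hall : ∀ i, a i v = ct := by
      intro i
      obtain ⟨l', hl'L, hi⟩ := hsat i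
      have hk := key _ _ hl'L hi
      have hmemf' : l' ∈ L.filter (fun l => l.pos && !l.univ) := by
        simp [List.mem_filter, hl'L, hk.1, hk.2]
      have : l' = ⟨v, true, false⟩ := huniq _ _ hmemf' hmemf
      subst this
      exact hi
    refine ⟨⟨v, true, false⟩, hl0L, ?_⟩
    simp only [LitSat]
    have hr : (⟨Set.range (fun i : Fin n => a i v),
        ⟨a ⟨0, hn⟩ v, ⟨0, hn⟩, rfl⟩⟩ : {S : Set D // S.Nonempty})
        = ⟨{ct}, Set.singleton_nonempty ct⟩ := by
      apply Subtype.ext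
      ext d
      simp only [Set.mem_range, Set.mem_singleton_iff]
      constructor
      · rintro ⟨i, rfl⟩; exact hall i
      · rintro rfl; exact ⟨⟨0, hn⟩, hall _⟩
    rw [hr]
    exact hidem ct
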